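/- Let θ, θ⋆ ∈ ℝᵈ, let δ⋆ be the sparsity structure of θ⋆, and suppose Σ_{j:θ⋆ⱼ=0}|θⱼ - θ⋆ⱼ| > 7·Σ_{j:θ⋆ⱼ≠0}|θⱼ - θ⋆ⱼ| (i.e. θ - θ⋆ is outside the cone 𝒩). Then B(θ) := (ρ/2)‖θ-θ⋆‖₁ + ρ(‖θ⋆‖₁ - ‖θ‖₁) ≤ -(ρ/4)‖θ-θ⋆‖₁ for every ρ ≥ 0. -/

import Mathlib

open Finset

/-- If `θ - θ⋆` lies outside the cone `𝒩` (off-support ℓ¹ mass exceeds 7 times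
the on-support ℓ¹ mass), then
`B(θ) = (ρ/2)‖θ-θ⋆‖₁ + ρ(‖θ⋆‖₁ - ‖θ‖₁) ≤ -(ρ/4)‖θ-θ⋆‖₁` for every `ρ ≥ 0`. -/
theorem B_bound_outside_cone (d : ℕ) (θ θs : Fin d → ℝ) (ρ : ℝ) (hρ : 0 ≤ ρ)
    (hout : (∑ j ∈ univ.filter (fun j => θs j = 0), |θ j - θs j|)
      > 7 * ∑ j ∈ univ.filter (fun j => θs j ≠ 0), |θ j - θs j|) :
    (ρ / 2) * (∑ j, |θ j - θs j|) + ρ * ((∑ j, |θs j|) - ∑ j, |θ j|)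
      ≤ -(ρ / 4) * ∑ j, |θ j - θs j| := by
  set A := ∑ j ∈ univ.filter (fun j => θs j = 0), |θ j - θs j| with hA
  set B := ∑ j ∈ univ.filter (fun j => θs j ≠ 0), |θ j - θs j| with hB
  have hsplit : (∑ j, |θ j - θs j|) = A + B := by
    rw [hA, hB, Finset.sum_filter_add_sum_filter_not]
  have hdiff : ((∑ j, |θs j|) - ∑ j, |θ j|) ≤ B - A := by
    rw [← Finset.sum_sub_distrib]
    have h1 : (∑ j, (|θs j| - |θ j|))
        = (∑ j ∈ univ.filter (fun j => θs j = 0), (|θs j| - |θ j|))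
          + ∑ j ∈ univ.filter (fun j => θs j ≠ 0), (|θs j| - |θ j|) := by
      rw [Finset.sum_filter_add_sum_filter_not]
    rw [h1]
    have h2 : (∑ j ∈ univ.filter (fun j => θs j = 0), (|θs j| - |θ j|)) = -A := by
      rw [hA, ← Finset.sum_neg_distrib]
      refine Finset.sum_congr rfl fun j hj => ?_
      simp only [Finset.mem_filter] at hj
      rw [hj.2]
      simp
    have h3 : (∑ j ∈ univ.filter (fun j => θs j ≠ 0), (|θs j| - |θ j|)) ≤ B := by
      rw [hB]
      refine Finset.sum_le_sum fun j _ => ?_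
      calc |θs j| - |θ j| ≤ |θs j - θ j| := abs_sub_abs_le_abs_sub _ _
        _ = |θ j - θs j| := abs_sub_comm _ _
    linarith
  rw [hsplit]
  have hB0 : 0 ≤ B := Finset.sum_nonneg fun j _ => abs_nonneg _
  nlinarith [mul_le_mul_of_nonneg_left hdiff hρ]
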